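/- If C is a co-c.e. cohesive set, then for every partial computable function ψ : ℕ → ℕ with C ⊆* dom(ψ), there is a total computable function f : ℕ → ℕ such that C ⊆* {i : ψ(i)↓ = f(i)}. -/

import Mathlib

def Cohesive (C : Set ℕ) : Prop :=
  C.Infinite ∧ ∀ W : Set ℕ, REPred (· ∈ W) → (W ∩ C).Finite ∨ (Wᶜ ∩ C).Finite

theorem coCE_cohesive_total_representative (C : Set ℕ) (hC : Cohesive C)
    (hcoce : REPred (· ∈ Cᶜ)) (ψ : ℕ →. ℕ) (hψ : Nat.Partrec ψ)
    (hdom : (C \ {i | (ψ i).Dom}).Finite) :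
    ∃ f : ℕ → ℕ, Computable f ∧ (C \ {i | f i ∈ ψ i}).Finite := by
  classical
  -- the partial function that outputs 0 on Cᶜ
  have hg : Partrec (fun n => (Part.assert (n ∈ Cᶜ) fun _ => Part.some ()).map
      fun _ => (0 : ℕ)) := hcoce.map ((Computable.const 0).comp Computable.fst).to₂
  set g : ℕ →. ℕ := fun n => (Part.assert (n ∈ Cᶜ) fun _ => Part.some ()).map
      fun _ => (0 : ℕ) with hgdef
  have hgdom : ∀ n, (g n).Dom ↔ n ∈ Cᶜ := by
    intro n
    simp [hgdef, Part.assert]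
  -- merge ψ with g
  obtain ⟨k, hk, H⟩ := Partrec.merge' (Partrec.nat_iff.2 hψ) hg
  -- the set where k diverges is finite
  have hkdiv : {a | ¬(k a).Dom} ⊆ C \ {i | (ψ i).Dom} := by
    intro a ha
    simp only [Set.mem_setOf_eq] at ha
    rw [(H a).2, hgdom] at ha
    push_neg at ha
    constructor
    · simpa using ha.2
    · exact ha.1
  have hfin : {a | ¬(k a).Dom}.Finite := hdom.subset hkdiv
  -- a bound on the divergence set
  obtain ⟨N, hN⟩ : ∃ N, ∀ a ∈ {a | ¬(k a).Dom}, a < N := by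
    obtain ⟨N, hN⟩ := (hfin.bddAbove)
    exact ⟨N + 1, fun a ha => Nat.lt_succ_of_le (hN ha)⟩
  -- the characteristic function of divergence, computable since it's
  -- read off from a fixed finite list
  set l : List Bool := (List.range N).map (fun b => decide (¬(k b).Dom)) with hl
  set c : ℕ → Bool := fun a => l.getD a false with hc
  have hcc : Computable c := by
    have := (Primrec.list_getD (α := Bool) false).comp (Primrec.const l) Primrec.id
    exact Primrec.to_comp this
  have hcd : ∀ a, c a = true ↔ ¬(k a).Dom := by
    intro a
    by_cases h : a < N
    · simp [hc, hl, List.getD, List.getElem?_map, List.getElem?_range h]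
    · have hdom' : (k a).Dom := by
        by_contra hcon
        exact h (hN a hcon)
      have : l.getD a false = false := by
        apply List.getD_eq_default
        simp [hl]
        omega
      simp only [hc, hdom', not_true, iff_false, Bool.not_eq_true]
      simpa [List.getD] using this
  -- the patched total partial recursive function
  set k' : ℕ →. ℕ := fun a => bif c a then Part.some 0 else k a with hk'
  have hk'p : Partrec k' := Partrec.cond hcc (Computable.const 0) hk
  have htot : ∀ a, (k' a).Dom := by
    intro a
    simp only [hk']
    cases hca : c a with
    | true => simp
    | false =>
      simp only [Bool.cond_false]
      by_contra hcon
      rw [← hcd a] at hcon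
      rw [hca] at hcon
      exact Bool.false_ne_true hcon
  refine ⟨fun a => (k' a).get (htot a), ?_, ?_⟩
  · exact hk'p.of_eq fun a => (Part.some_get (htot a)).symm
  · apply hdom.subset
    intro i hi
    refine ⟨hi.1, fun hdi => hi.2 ?_⟩
    simp only [Set.mem_setOf_eq] at hdi ⊢
    -- i ∈ C, ψ i converges, so k i converges and k' i = k i
    have hki : (k i).Dom := (H i).2.mpr (Or.inl hdi)
    have hci : c i = false := by
      rw [← Bool.not_eq_true, hcd i]
      simpa using hki
    have hk'i : k' i = k i := by simp [hk', hci]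
    have hmem : (k' i).get (htot i) ∈ k i := by
      rw [← hk'i]; exact Part.get_mem (htot i)
    rcases (H i).1 _ hmem with h | h
    · exact h
    · exfalso
      have : (g i).Dom := h.fst
      rw [hgdom] at this
      exact this hi.1
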